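/- Let Ω be a measurable space, M a topological space containing a countable dense subset, and p : M → M(Ω) a continuous map into the space of finite measures on Ω equipped with the total variation norm. Then there exists a finite measure μ₀ on Ω such that p(ξ) is absolutely continuous with respect to μ₀ for every ξ ∈ M. -/

import Mathlib

open MeasureTheory Filter
open scoped ENNReal Topology

lemma abs_apply_le_totalVariation {α : Type*} [MeasurableSpace α]
    (s : MeasureTheory.SignedMeasure α) {i : Set α} (hi : MeasurableSet i) :
    |s i| ≤ (s.totalVariation Set.univ).toReal := by
  have hrepr : s i = (s.toJordanDecomposition.posPart i).toReal
      - (s.toJordanDecomposition.negPart i).toReal := by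
    conv_lhs => rw [← s.toSignedMeasure_toJordanDecomposition]
    rw [JordanDecomposition.toSignedMeasure, VectorMeasure.sub_apply,
      Measure.toSignedMeasure_apply_measurable hi,
      Measure.toSignedMeasure_apply_measurable hi]
    rfl
  have hfin : s.totalVariation Set.univ ≠ ∞ := by
    rw [SignedMeasure.totalVariation]; exact measure_ne_top _ _
  have hpos : s.toJordanDecomposition.posPart i ≤ s.totalVariation Set.univ :=
    le_trans (measure_mono (Set.subset_univ i)) (by
      simp [SignedMeasure.totalVariation, Measure.add_apply, le_add_right])
  have hneg : s.toJordanDecomposition.negPart i ≤ s.totalVariation Set.univ :=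
    le_trans (measure_mono (Set.subset_univ i)) (by
      simp [SignedMeasure.totalVariation, Measure.add_apply, le_add_left])
  rw [hrepr]
  rw [abs_sub_le_iff]
  constructor
  · have := ENNReal.toReal_mono hfin hpos
    have h0 : (0:ℝ) ≤ (s.toJordanDecomposition.negPart i).toReal := ENNReal.toReal_nonneg
    linarith
  · have := ENNReal.toReal_mono hfin hneg
    have h0 : (0:ℝ) ≤ (s.toJordanDecomposition.posPart i).toReal := ENNReal.toReal_nonneg
    linarith

/-- If `M` is separable and `p : M → M(Ω)` is continuous with respect to the total
variation norm, then there is a finite measure `μ₀` dominating all `p ξ`. -/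
theorem stmt_1 {Ω M : Type*} [MeasurableSpace Ω] [TopologicalSpace M]
    [TopologicalSpace.SeparableSpace M]
    (p : M → Measure Ω) (hfin : ∀ ξ, IsFiniteMeasure (p ξ))
    (hcont : ∀ ξ₀ : M, ∀ ε : ℝ≥0∞, 0 < ε →
      ∀ᶠ ξ in 𝓝 ξ₀,
        (@Measure.toSignedMeasure Ω _ (p ξ) (hfin ξ) -
          @Measure.toSignedMeasure Ω _ (p ξ₀) (hfin ξ₀)).totalVariation Set.univ < ε) :
    ∃ μ₀ : Measure Ω, IsFiniteMeasure μ₀ ∧ ∀ ξ : M, p ξ ≪ μ₀ := by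
  rcases isEmpty_or_nonempty M with hM | hM
  · exact ⟨0, inferInstance, fun ξ => (IsEmpty.false ξ).elim⟩
  set f : ℕ → M := TopologicalSpace.denseSeq M with hf
  have hdense : DenseRange f := TopologicalSpace.denseRange_denseSeq M
  set c : ℕ → ℝ≥0∞ := fun n => (2⁻¹ : ℝ≥0∞) ^ n * ((p (f n)) Set.univ + 1)⁻¹ with hc
  have hc0 : ∀ n, c n ≠ 0 := by
    intro n
    apply mul_ne_zero
    · exact pow_ne_zero _ (by simp)
    · rw [ENNReal.inv_ne_zero]
      have := (hfin (f n)).measure_univ_lt_top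
      exact (ENNReal.add_lt_top.2 ⟨this, ENNReal.one_lt_top⟩).ne
  set μ₀ : Measure Ω := Measure.sum (fun n => c n • p (f n)) with hμ₀
  have hμ₀fin : IsFiniteMeasure μ₀ := by
    constructor
    rw [hμ₀, Measure.sum_apply _ MeasurableSet.univ]
    have hle : ∀ n, (c n • p (f n)) Set.univ ≤ (2⁻¹ : ℝ≥0∞) ^ n := by
      intro n
      rw [Measure.smul_apply, smul_eq_mul, hc, mul_assoc]
      calc (2⁻¹ : ℝ≥0∞) ^ n * (((p (f n)) Set.univ + 1)⁻¹ * (p (f n)) Set.univ)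
          ≤ (2⁻¹ : ℝ≥0∞) ^ n * 1 := by
            gcongr
            rw [ENNReal.inv_mul_le_iff]
            · rw [mul_one]; exact le_self_add
            · simp
            · exact (ENNReal.add_lt_top.2 ⟨(hfin (f n)).measure_univ_lt_top,
                ENNReal.one_lt_top⟩).ne
        _ = (2⁻¹ : ℝ≥0∞) ^ n := mul_one _
    calc ∑' n, (c n • p (f n)) Set.univ ≤ ∑' n, (2⁻¹ : ℝ≥0∞) ^ n :=
          ENNReal.tsum_le_tsum hle
      _ < ∞ := by
          rw [ENNReal.tsum_geometric]
          simp [ENNReal.sub_ne_top]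
  refine ⟨μ₀, hμ₀fin, fun ξ s hs => ?_⟩
  -- reduce to measurable superset
  set t := toMeasurable μ₀ s with ht
  have htm : MeasurableSet t := measurableSet_toMeasurable μ₀ s
  have hts : s ⊆ t := subset_toMeasurable μ₀ s
  have hμ₀t : μ₀ t = 0 := by rw [ht, measure_toMeasurable]; exact hs
  suffices h : p ξ t = 0 by exact measure_mono_null hts h
  -- all p (f n) vanish on t
  have hpn : ∀ n, p (f n) t = 0 := by
    intro n
    have : (c n • p (f n)) t = 0 := by
      have := Measure.sum_apply (fun n => c n • p (f n)) htm
      rw [hμ₀] at hμ₀t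
      rw [this] at hμ₀t
      exact (ENNReal.tsum_eq_zero.1 hμ₀t) n
    rw [Measure.smul_apply, smul_eq_mul, mul_eq_zero] at this
    exact this.resolve_left (hc0 n)
  -- p ξ t is smaller than any ε > 0
  have key : ∀ δ : ℝ, 0 < δ → ((p ξ) t).toReal ≤ δ := by
    intro δ hδ
    have hev := hcont ξ (ENNReal.ofReal δ) (by simpa using hδ)
    rcases eventually_nhds_iff.1 hev with ⟨U, hU, hUopen, hξU⟩
    obtain ⟨n, hnU⟩ := hdense.exists_mem_open hUopen ⟨ξ, hξU⟩
    set V := (@Measure.toSignedMeasure Ω _ (p (f n)) (hfin (f n)) -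
      @Measure.toSignedMeasure Ω _ (p ξ) (hfin ξ)) with hV
    have hvar : V.totalVariation Set.univ < ENNReal.ofReal δ := hU _ hnU
    have hVt : V t = -((p ξ) t).toReal := by
      rw [hV, VectorMeasure.sub_apply, Measure.toSignedMeasure_apply_measurable htm,
        Measure.toSignedMeasure_apply_measurable htm, measureReal_def, measureReal_def, hpn n]
      simp
    have habs := abs_apply_le_totalVariation V htm
    rw [hVt, abs_neg, abs_of_nonneg ENNReal.toReal_nonneg] at habs
    have : (V.totalVariation Set.univ).toReal ≤ δ := by
      have := ENNReal.toReal_mono (by simp) hvar.le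
      calc (V.totalVariation Set.univ).toReal ≤ (ENNReal.ofReal δ).toReal := this
        _ = δ := ENNReal.toReal_ofReal hδ.le
    linarith
  have hfinξ := hfin ξ
  have hne : (p ξ) t ≠ ∞ := measure_ne_top _ _
  have h0 : ((p ξ) t).toReal = 0 := by
    by_contra h
    have hpos : 0 < ((p ξ) t).toReal := lt_of_le_of_ne ENNReal.toReal_nonneg (Ne.symm h)
    have := key (((p ξ) t).toReal / 2) (by linarith)
    linarith
  exact (ENNReal.toReal_eq_zero_iff _).1 h0 |>.resolve_right hne
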